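/- Let $M \subseteq \mathbb{Z}^n$ be a positive normal affine monoid with $\mathrm{gp}(M) = \mathbb{Z}^n$ and support forms $\sigma_1, \dots, \sigma_s$. For each index $i$ there exists $z \in \mathrm{relint}(M)$ with $\sigma_i(z) = 1$. -/

import Mathlib

open scoped BigOperators

noncomputable section

/-- The canonical map `ℤⁿ → ℝⁿ`. -/
def toR {n : ℕ} (z : Fin n → ℤ) : Fin n → ℝ := fun i => (z i : ℝ)

/-- The real extension of an integral linear form. -/
def realForm {n : ℕ} (ℓ : (Fin n → ℤ) →ₗ[ℤ] ℤ) (x : Fin n → ℝ) : ℝ :=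
  ∑ k, (ℓ (Pi.single k 1) : ℝ) * x k

/-- The cone in `ℝⁿ` generated by a set of lattice points. -/
def coneOf {n : ℕ} (M : Set (Fin n → ℤ)) : Set (Fin n → ℝ) :=
  {x | ∃ (t : Finset (Fin n → ℤ)) (c : (Fin n → ℤ) → ℝ),
    (↑t : Set (Fin n → ℤ)) ⊆ M ∧ (∀ a, 0 ≤ c a) ∧ x = ∑ a ∈ t, c a • toR a}

/-- `relint M` with respect to the support forms `σ`. -/
def relintM {n s : ℕ} (M : AddSubmonoid (Fin n → ℤ))
    (σ : Fin s → ((Fin n → ℤ) →ₗ[ℤ] ℤ)) : Set (Fin n → ℤ) :=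
  {a | a ∈ M ∧ ∀ i, 0 < σ i a}

def toQ {n : ℕ} (z : Fin n → ℤ) : Fin n → ℚ := fun i => (z i : ℚ)

lemma form_apply_sum {n : ℕ} {K : Type*} [CommRing K] (f : (Fin n → K) →ₗ[K] K) (z : Fin n → K) :
    f z = ∑ k, z k * f (Pi.single k 1) := by
  have hz : z = ∑ k, z k • (Pi.single k (1 : K) : Fin n → K) := by
    funext j
    rw [Finset.sum_apply]
    simp [Pi.single_apply, smul_eq_mul]
  conv_lhs => rw [hz]
  rw [map_sum]
  simp [smul_eq_mul]

lemma realForm_apply_int {n : ℕ} (ℓ : (Fin n → ℤ) →ₗ[ℤ] ℤ) (z : Fin n → ℤ) :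
    realForm ℓ (toR z) = (ℓ z : ℝ) := by
  rw [form_apply_sum ℓ z, realForm]
  push_cast
  simp [toR, mul_comm]

lemma realForm_add {n : ℕ} (ℓ : (Fin n → ℤ) →ₗ[ℤ] ℤ) (x y : Fin n → ℝ) :
    realForm ℓ (x + y) = realForm ℓ x + realForm ℓ y := by
  simp [realForm, mul_add, Finset.sum_add_distrib]

lemma realForm_smul {n : ℕ} (ℓ : (Fin n → ℤ) →ₗ[ℤ] ℤ) (c : ℝ) (x : Fin n → ℝ) :
    realForm ℓ (c • x) = c * realForm ℓ x := by
  simp only [realForm, Finset.mul_sum, Pi.smul_apply, smul_eq_mul]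
  exact Finset.sum_congr rfl fun k _ => by ring

lemma realForm_zsmul_form {n : ℕ} (c : ℤ) (ℓ : (Fin n → ℤ) →ₗ[ℤ] ℤ) (x : Fin n → ℝ) :
    realForm (c • ℓ) x = (c : ℝ) * realForm ℓ x := by
  simp [realForm, Finset.mul_sum, mul_assoc]

lemma realForm_sub_form {n : ℕ} (ℓ₁ ℓ₂ : (Fin n → ℤ) →ₗ[ℤ] ℤ) (x : Fin n → ℝ) :
    realForm (ℓ₁ - ℓ₂) x = realForm ℓ₁ x - realForm ℓ₂ x := by
  simp [realForm, sub_mul, Finset.sum_sub_distrib]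

/-- Bezout over a finset. -/

lemma bezout_finset {α : Type*} [DecidableEq α] (st : Finset α) (f : α → ℤ) :
    ∃ c : α → ℤ, ∑ k ∈ st, c k * f k = st.gcd f := by
  classical
  induction st using Finset.induction_on with
  | empty => exact ⟨0, by simp⟩
  | @insert a st ha ih =>
    obtain ⟨c, hc⟩ := ih
    refine ⟨fun x => if x = a then Int.gcdA (f a) (st.gcd f)
      else c x * Int.gcdB (f a) (st.gcd f), ?_⟩
    rw [Finset.sum_insert ha, Finset.gcd_insert]
    have h2 : ∑ k ∈ st, (if k = a then Int.gcdA (f a) (st.gcd f)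
        else c k * Int.gcdB (f a) (st.gcd f)) * f k
        = (∑ k ∈ st, c k * f k) * Int.gcdB (f a) (st.gcd f) := by
      rw [Finset.sum_mul]
      refine Finset.sum_congr rfl fun k hk => ?_
      rw [if_neg (by rintro rfl; exact ha hk)]
      ring
    rw [h2, hc, ← Int.coe_gcd, Int.gcd_eq_gcd_ab]
    simp
    ring


lemma carath_aux {ι V : Type*} [DecidableEq ι] [AddCommGroup V] [Module ℝ V] (v : ι → V) :
    ∀ (N : ℕ) (t : Finset ι), t.card ≤ N → ∀ c : ι → ℝ, (∀ a, 0 ≤ c a) →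
    ∃ t' ⊆ t, LinearIndependent ℝ (fun a : {x // x ∈ t'} => v a) ∧
      ∃ c' : ι → ℝ, (∀ a, 0 ≤ c' a) ∧
        ∑ a ∈ t', c' a • v a = ∑ a ∈ t, c a • v a := by
  intro N
  induction N with
  | zero =>
    intro t ht c hc
    have : t = ∅ := Finset.card_eq_zero.mp (Nat.le_zero.mp ht)
    subst this
    have : IsEmpty {x // x ∈ (∅ : Finset ι)} := ⟨fun a => absurd a.2 (Finset.notMem_empty _)⟩
    exact ⟨∅, subset_rfl, linearIndependent_empty_type, c, hc, rfl⟩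
  | succ N ih =>
    intro t ht c hc
    by_cases hli : LinearIndependent ℝ (fun a : {x // x ∈ t} => v a)
    · exact ⟨t, subset_rfl, hli, c, hc, rfl⟩
    · -- get a dependence relation
      obtain ⟨g, hg0, i0, hgi0⟩ := Fintype.not_linearIndependent_iff.mp hli
      set d : ι → ℝ := fun a => if h : a ∈ t then g ⟨a, h⟩ else 0 with hd
      have hdsum : ∑ a ∈ t, d a • v a = 0 := by
        rw [← Finset.sum_coe_sort t (fun a => d a • v a)]
        rw [← hg0]
        exact Finset.sum_congr rfl fun a _ => by simp [hd, a.2]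
      have hdne : ∃ a ∈ t, d a ≠ 0 := ⟨i0, i0.2, by simpa [hd, i0.2] using hgi0⟩
      -- get e with a positive value
      obtain ⟨e, hesum, a1, ha1t, ha1pos⟩ :
          ∃ e : ι → ℝ, (∑ a ∈ t, e a • v a = 0) ∧ ∃ a ∈ t, 0 < e a := by
        obtain ⟨a, hat, hane⟩ := hdne
        rcases lt_or_gt_of_ne hane with h | h
        · refine ⟨fun x => -d x, ?_, a, hat, by simpa using h⟩
          simp only [neg_smul, Finset.sum_neg_distrib, hdsum, neg_zero]
        · exact ⟨d, hdsum, a, hat, h⟩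
      classical
      set P : Finset ι := t.filter (fun a => 0 < e a) with hP
      have hPne : P.Nonempty := ⟨a1, Finset.mem_filter.mpr ⟨ha1t, ha1pos⟩⟩
      obtain ⟨a0, ha0P, ha0min⟩ := Finset.exists_min_image P (fun a => c a / e a) hPne
      have ha0t : a0 ∈ t := (Finset.mem_filter.mp ha0P).1
      have ha0e : 0 < e a0 := (Finset.mem_filter.mp ha0P).2
      set r : ℝ := c a0 / e a0 with hr
      have hr0 : 0 ≤ r := div_nonneg (hc a0) ha0e.le
      set c'' : ι → ℝ := fun a => if a ∈ t then c a - r * e a else c a with hc''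
      have hc''nn : ∀ a, 0 ≤ c'' a := by
        intro a
        simp only [hc'']
        split
        · rename_i hat
          by_cases hae : 0 < e a
          · have haP : a ∈ P := Finset.mem_filter.mpr ⟨hat, hae⟩
            have h2 : r * e a ≤ c a := (le_div_iff₀ hae).mp (ha0min a haP)
            linarith
          · push_neg at hae
            have h3 : r * e a ≤ 0 := mul_nonpos_of_nonneg_of_nonpos hr0 hae
            have h4 := hc a
            linarith
        · exact hc a
      have hc''a0 : c'' a0 = 0 := by
        simp only [hc'', if_pos ha0t, hr]
        field_simp
        ring
      have hsum'' : ∑ a ∈ t, c'' a • v a = ∑ a ∈ t, c a • v a := by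
        have : ∑ a ∈ t, c'' a • v a
            = ∑ a ∈ t, (c a • v a - r • (e a • v a)) := by
          refine Finset.sum_congr rfl fun a hat => ?_
          simp only [hc'', if_pos hat, sub_smul, smul_smul]
        rw [this, Finset.sum_sub_distrib, ← Finset.smul_sum, hesum, smul_zero, sub_zero]
      have hsum''' : ∑ a ∈ t.erase a0, c'' a • v a = ∑ a ∈ t, c a • v a := by
        rw [← hsum'']
        rw [← Finset.sum_erase_add t _ ha0t, hc''a0]
        simp
      have hcard : (t.erase a0).card ≤ N := by
        have := Finset.card_erase_of_mem ha0t
        omega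
      obtain ⟨t', ht'sub, ht'li, c', hc'nn, hc'sum⟩ := ih (t.erase a0) hcard c'' hc''nn
      exact ⟨t', ht'sub.trans (Finset.erase_subset _ _), ht'li, c', hc'nn,
        hc'sum.trans hsum'''⟩

lemma rat_clear (q : ℚ) (D : ℕ) (h : q.den ∣ D) :
    (((D / q.den : ℕ) : ℚ) * (q.num : ℚ)) = (D : ℚ) * q := by
  have hD : (D / q.den) * q.den = D := Nat.div_mul_cancel h
  have hnum : (q.den : ℚ) * q = (q.num : ℚ) := by rw [mul_comm]; exact Rat.mul_den_eq_num q
  calc (((D / q.den : ℕ) : ℚ) * (q.num : ℚ))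
      = ((D / q.den : ℕ) : ℚ) * ((q.den : ℚ) * q) := by rw [hnum]
    _ = (((D / q.den) * q.den : ℕ) : ℚ) * q := by push_cast; ring
    _ = (D : ℚ) * q := by rw [hD]

lemma toQ_injective {n : ℕ} : Function.Injective (toQ (n := n)) := by
  intro a b hab
  funext k
  have h := congrFun hab k
  simp only [toQ] at h
  exact_mod_cast h

lemma mem_of_forms_nonneg {n s : ℕ} (M : AddSubmonoid (Fin n → ℤ))
    (hnorm : ∀ (x : Fin n → ℤ) (k : ℕ), 0 < k → (k : ℤ) • x ∈ M → x ∈ M)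
    (σ : Fin s → ((Fin n → ℤ) →ₗ[ℤ] ℤ))
    (hcone : coneOf (M : Set (Fin n → ℤ)) = {x | ∀ i, 0 ≤ realForm (σ i) x})
    (z : Fin n → ℤ) (hz : ∀ j, 0 ≤ σ j z) : z ∈ M := by
  classical
  have hzc : toR z ∈ coneOf (M : Set (Fin n → ℤ)) := by
    rw [hcone]
    intro j
    rw [realForm_apply_int]
    exact_mod_cast hz j
  obtain ⟨t, c, htM, hc, hx⟩ := hzc
  obtain ⟨t', ht'sub, ht'li, c', hc', hsum⟩ := carath_aux toR t.card t le_rfl c hc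
  rw [← hx] at hsum
  -- hsum : ∑ a ∈ t', c' a • toR a = toR z
  have hspan : toQ z ∈ Submodule.span ℚ ((t'.image toQ : Finset (Fin n → ℚ)) : Set (Fin n → ℚ)) := by
    by_contra hns
    obtain ⟨f, hf0, hfbot⟩ := Submodule.exists_dual_map_eq_bot_of_notMem hns inferInstance
    set F : (Fin n → ℝ) → ℝ := fun x => ∑ k, ((f (Pi.single k 1) : ℚ) : ℝ) * x k with hF
    have hFa : ∀ a : Fin n → ℤ, F (toR a) = ((f (toQ a) : ℚ) : ℝ) := by
      intro a
      rw [form_apply_sum f (toQ a)]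
      push_cast
      simp [hF, toR, toQ, mul_comm]
    have hFvanish : ∀ a ∈ t', F (toR a) = 0 := by
      intro a hat
      rw [hFa]
      have hzero : f (toQ a) = 0 := by
        have hmem : f (toQ a) ∈ Submodule.map f (Submodule.span ℚ
            ((t'.image toQ : Finset (Fin n → ℚ)) : Set (Fin n → ℚ))) :=
          Submodule.mem_map_of_mem (Submodule.subset_span (by
            simp only [Finset.coe_image, Set.mem_image, Finset.mem_coe]
            exact ⟨a, hat, rfl⟩))
        rw [hfbot] at hmem
        exact (Submodule.mem_bot ℚ).mp hmem
      simp [hzero]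
    have hFsum : F (∑ a ∈ t', c' a • toR a) = ∑ a ∈ t', c' a * F (toR a) := by
      simp only [hF, Finset.sum_apply, Pi.smul_apply, smul_eq_mul, Finset.mul_sum]
      rw [Finset.sum_comm]
      refine Finset.sum_congr rfl fun a _ => ?_
      refine Finset.sum_congr rfl fun k _ => by ring
    have hF0 : F (toR z) = 0 := by
      rw [← hsum, hFsum]
      exact Finset.sum_eq_zero fun a hat => by rw [hFvanish a hat, mul_zero]
    rw [hFa] at hF0
    exact hf0 (by exact_mod_cast hF0)
  obtain ⟨qc, -, hqc⟩ := Submodule.mem_span_finset.mp hspan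
  rw [Finset.sum_image (fun x _ y _ h => toQ_injective h)] at hqc
  -- hqc : ∑ a ∈ t', qc (toQ a) • toQ a = toQ z
  set q' : (Fin n → ℤ) → ℚ := fun a => qc (toQ a) with hq'
  have hqk : ∀ k, (z k : ℚ) = ∑ a ∈ t', q' a * (a k : ℚ) := by
    intro k
    have := congrFun hqc k
    rw [Finset.sum_apply] at this
    simpa [toQ, Pi.smul_apply, smul_eq_mul] using this.symm
  have hreal : toR z = ∑ a ∈ t', ((q' a : ℚ) : ℝ) • toR a := by
    funext k
    rw [Finset.sum_apply]
    have h1 := congrArg (fun x : ℚ => (x : ℝ)) (hqk k)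
    push_cast at h1
    simpa [toR, Pi.smul_apply, smul_eq_mul] using h1
  have hcoef : ∀ a : {x // x ∈ t'}, ((q' (a : Fin n → ℤ) : ℚ) : ℝ) - c' (a : Fin n → ℤ) = 0 := by
    apply Fintype.linearIndependent_iff.mp ht'li
    rw [Finset.sum_coe_sort t' (fun a => (((q' a : ℚ) : ℝ) - c' a) • toR a)]
    simp only [sub_smul, Finset.sum_sub_distrib]
    rw [← hreal, hsum, sub_self]
  have hq'nn : ∀ a ∈ t', 0 ≤ q' a := by
    intro a hat
    have := hcoef ⟨a, hat⟩
    have h2 : ((q' a : ℚ) : ℝ) = c' a := by linarith [this]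
    have := hc' a
    rw [← h2] at this
    exact_mod_cast this
  set D : ℕ := ∏ a ∈ t', (q' a).den with hD
  have hDpos : 0 < D := Finset.prod_pos fun a _ => (q' a).pos
  set m : (Fin n → ℤ) → ℕ := fun a => (D / (q' a).den) * (q' a).num.toNat with hm
  have hkey : ∀ a ∈ t', ((m a : ℕ) : ℚ) = (D : ℚ) * q' a := by
    intro a hat
    have hdvd : (q' a).den ∣ D := Finset.dvd_prod_of_mem _ hat
    have hnum : ((q' a).num.toNat : ℚ) = ((q' a).num : ℚ) := by
      have := Int.toNat_of_nonneg (Rat.num_nonneg.mpr (hq'nn a hat))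
      exact_mod_cast congrArg (fun x : ℤ => (x : ℚ)) this
    rw [hm]
    push_cast
    rw [hnum]
    exact_mod_cast rat_clear (q' a) D hdvd
  have hfinal : (D : ℤ) • z = ∑ a ∈ t', (m a : ℤ) • a := by
    funext k
    rw [Finset.sum_apply]
    have : ((D : ℤ) * z k : ℚ) = ((∑ a ∈ t', (m a : ℤ) * a k : ℤ) : ℚ) := by
      push_cast
      rw [hqk k, Finset.mul_sum]
      refine Finset.sum_congr rfl fun a hat => ?_
      rw [← mul_assoc, ← hkey a hat]
    have h3 : (D : ℤ) * z k = ∑ a ∈ t', (m a : ℤ) * a k := by exact_mod_cast this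
    simpa [Pi.smul_apply, smul_eq_mul] using h3
  have hmem : (D : ℤ) • z ∈ M := by
    rw [hfinal]
    refine AddSubmonoid.sum_mem M fun a hat => ?_
    have haM : a ∈ M := htM (ht'sub hat)
    rw [natCast_zsmul]
    exact nsmul_mem haM _
  exact hnorm z D hDpos hmem

lemma exists_int_point {n s : ℕ} (J : Finset (Fin s)) (g : Fin s → ((Fin n → ℤ) →ₗ[ℤ] ℤ))
    (p : Fin n → ℝ) (hp : ∀ j ∈ J, 0 < realForm (g j) p) :
    ∃ v : Fin n → ℤ, ∀ j ∈ J, 0 < g j v := by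
  classical
  have hcont : ∀ j, Continuous (realForm (g j)) := fun j =>
    continuous_finset_sum _ fun k _ => continuous_const.mul (continuous_apply k)
  set U : Set (Fin n → ℝ) := ⋂ j ∈ J, (realForm (g j)) ⁻¹' Set.Ioi 0 with hU
  have hUopen : IsOpen U := isOpen_biInter_finset fun j _ => (isOpen_Ioi).preimage (hcont j)
  have hpU : p ∈ U := Set.mem_iInter₂.mpr fun j hj => hp j hj
  have hdense : Dense (Set.pi Set.univ fun _ : Fin n => Set.range ((↑) : ℚ → ℝ)) :=
    dense_pi Set.univ fun i _ => Rat.denseRange_cast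
  obtain ⟨x, hxD, hxU⟩ := hdense.exists_mem_open hUopen ⟨p, hpU⟩
  have hxq : ∀ k, ∃ q : ℚ, (q : ℝ) = x k := by
    intro k
    rw [Set.mem_pi] at hxD
    obtain ⟨qq, hq⟩ := hxD k (Set.mem_univ k)
    exact ⟨qq, hq⟩
  choose q hq using hxq
  set D : ℕ := ∏ k, (q k).den with hD
  have hDpos : 0 < D := Finset.prod_pos fun k _ => (q k).pos
  set v : Fin n → ℤ := fun k => ((D / (q k).den : ℕ) : ℤ) * (q k).num with hv
  have hvk : ∀ k, ((v k : ℤ) : ℝ) = (D : ℝ) * x k := by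
    intro k
    have h1 : ((v k : ℤ) : ℚ) = (D : ℚ) * q k := by
      rw [hv]
      push_cast
      exact rat_clear (q k) D (Finset.dvd_prod_of_mem _ (Finset.mem_univ k))
    have h2 := congrArg (fun r : ℚ => (r : ℝ)) h1
    push_cast at h2
    rw [h2, hq k]
  refine ⟨v, fun j hj => ?_⟩
  have hxj : 0 < realForm (g j) x := by
    have := Set.mem_iInter₂.mp hxU j hj
    exact this
  have h1 : realForm (g j) (toR v) = (D : ℝ) * realForm (g j) x := by
    rw [realForm, realForm, Finset.mul_sum]
    refine Finset.sum_congr rfl fun k _ => ?_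
    have : toR v k = (D : ℝ) * x k := hvk k
    rw [this]
    ring
  have hpos : (0 : ℝ) < ((g j) v : ℝ) := by
    rw [← realForm_apply_int, h1]
    positivity
  exact_mod_cast hpos

/-- For a positive normal affine monoid `M ⊆ ℤⁿ` with `gp M = ℤⁿ` and
support forms `σ₁, …, σ_s`, for each index `i` there is `z ∈ relint M` with `σᵢ z = 1`. -/
theorem exists_relint_point_with_form_one
    (n s : ℕ) (M : AddSubmonoid (Fin n → ℤ)) (hfg : M.FG)
    (hpos : ∀ a ∈ M, -a ∈ M → a = 0)
    (hnorm : ∀ (x : Fin n → ℤ) (k : ℕ), 0 < k → (k : ℤ) • x ∈ M → x ∈ M)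
    (hgp : AddSubgroup.closure (M : Set (Fin n → ℤ)) = ⊤)
    (σ : Fin s → ((Fin n → ℤ) →ₗ[ℤ] ℤ))
    (hcone : coneOf (M : Set (Fin n → ℤ)) = {x | ∀ i, 0 ≤ realForm (σ i) x})
    (hirr : ∀ i, ∃ x : Fin n → ℝ,
      (∀ j, j ≠ i → 0 ≤ realForm (σ j) x) ∧ realForm (σ i) x < 0)
    (hprim : ∀ i, Finset.univ.gcd (fun k => σ i (Pi.single k 1)) = 1) :
    ∀ i : Fin s, ∃ z ∈ relintM M σ, σ i z = 1 := by
  classical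
  intro i
  -- every element of M has nonnegative forms
  have hMnn : ∀ a ∈ M, ∀ j, 0 ≤ σ j a := by
    intro a haM j
    have hac : toR a ∈ coneOf (M : Set (Fin n → ℤ)) := by
      refine ⟨{a}, fun _ => 1, by simpa using haM, fun _ => zero_le_one, by simp⟩
    rw [hcone] at hac
    have h := hac j
    rw [realForm_apply_int] at h
    exact_mod_cast h
  -- no form vanishes identically on M
  have hnz : ∀ j : Fin s, ¬(∀ m ∈ M, σ j m = 0) := by
    intro j hvan
    obtain ⟨x, hx1, hx2⟩ := hirr j
    have hall : ∀ v : Fin n → ℤ, σ j v = 0 := by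
      intro v
      have hv : v ∈ AddSubgroup.closure (M : Set (Fin n → ℤ)) := by
        rw [hgp]; exact AddSubgroup.mem_top v
      induction hv using AddSubgroup.closure_induction with
      | mem m hm => exact hvan m hm
      | zero => exact map_zero _
      | add a b _ _ ha hb => rw [map_add, ha, hb, add_zero]
      | neg a _ ha => rw [map_neg, ha, neg_zero]
    have hz0 : realForm (σ j) x = 0 := by
      rw [realForm]
      have : ∀ k, σ j (Pi.single k 1) = 0 := fun k => hall _
      simp [this]
    linarith
  -- a relative interior point u
  obtain ⟨S, hS⟩ := hfg
  set u : Fin n → ℤ := ∑ a ∈ S, a with hudef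
  have huM : u ∈ M := by
    rw [← hS]
    exact AddSubmonoid.sum_mem _ fun a ha => AddSubmonoid.subset_closure ha
  have hu : ∀ j, 0 < σ j u := by
    intro j
    have hsum : σ j u = ∑ a ∈ S, σ j a := by rw [hudef, map_sum]
    have hSM : ∀ a ∈ S, a ∈ M := fun a ha => by
      rw [← hS]; exact AddSubmonoid.subset_closure ha
    have hnn : ∀ a ∈ S, 0 ≤ σ j a := fun a ha => hMnn a (hSM a ha) j
    have h0 : 0 ≤ σ j u := hsum ▸ Finset.sum_nonneg hnn
    rcases h0.lt_or_eq with h | h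
    · exact h
    · exfalso
      apply hnz j
      have hterm : ∀ a ∈ S, σ j a = 0 :=
        (Finset.sum_eq_zero_iff_of_nonneg hnn).mp (by rw [← hsum, ← h])
      intro m hm
      rw [← hS] at hm
      induction hm using AddSubmonoid.closure_induction with
      | mem a ha => exact hterm a ha
      | zero => exact map_zero _
      | add a b _ _ ha hb => rw [map_add, ha, hb, add_zero]
  -- Bezout point y with σ i y = 1
  obtain ⟨cB, hcB⟩ := bezout_finset Finset.univ (fun k => σ i (Pi.single k 1))
  set y : Fin n → ℤ := ∑ k, cB k • (Pi.single k 1 : Fin n → ℤ) with hydef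
  have hy : σ i y = 1 := by
    rw [hydef, map_sum]
    have : ∀ k ∈ Finset.univ, σ i (cB k • (Pi.single k 1 : Fin n → ℤ))
        = cB k * σ i (Pi.single k 1) := fun k _ => by rw [map_zsmul, smul_eq_mul]
    rw [Finset.sum_congr rfl this, hcB, hprim i]
  -- the auxiliary forms g j
  set g : Fin s → ((Fin n → ℤ) →ₗ[ℤ] ℤ) :=
    fun j => (σ i u) • σ j - (σ j u) • σ i with hgdef
  obtain ⟨x, hx1, hx2⟩ := hirr i
  set α : ℝ := realForm (σ i) x with hα
  set p : Fin n → ℝ := ((σ i u : ℤ) : ℝ) • x + (-α) • toR u with hpdef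
  have hσip : realForm (σ i) p = 0 := by
    rw [hpdef, realForm_add, realForm_smul, realForm_smul, realForm_apply_int, ← hα]
    ring
  have hσjp : ∀ j, j ≠ i → 0 < realForm (σ j) p := by
    intro j hjne
    rw [hpdef, realForm_add, realForm_smul, realForm_smul, realForm_apply_int]
    have t1 : (0:ℝ) ≤ ((σ i u : ℤ) : ℝ) * realForm (σ j) x :=
      mul_nonneg (by exact_mod_cast (hu i).le) (hx1 j hjne)
    have t2 : (0:ℝ) < (-α) * ((σ j u : ℤ) : ℝ) :=
      mul_pos (by rw [hα]; linarith) (by exact_mod_cast hu j)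
    linarith
  have hgjp : ∀ j ∈ Finset.univ.erase i, 0 < realForm (g j) p := by
    intro j hj
    have hjne : j ≠ i := (Finset.mem_erase.mp hj).1
    have h1 : realForm (g j) p
        = ((σ i u : ℤ) : ℝ) * realForm (σ j) p - ((σ j u : ℤ) : ℝ) * realForm (σ i) p := by
      rw [hgdef]
      rw [realForm_sub_form, realForm_zsmul_form, realForm_zsmul_form]
    rw [h1, hσip, mul_zero, sub_zero]
    exact mul_pos (by exact_mod_cast hu i) (hσjp j hjne)
  obtain ⟨v, hvpos⟩ := exists_int_point (Finset.univ.erase i) g p hgjp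
  -- the facet point w
  set w : Fin n → ℤ := (σ i u) • v - (σ i v) • u with hwdef
  have hgw : ∀ j, σ j w = g j v := by
    intro j
    rw [hwdef, hgdef]
    simp only [map_sub, map_zsmul, LinearMap.sub_apply, LinearMap.smul_apply, smul_eq_mul]
    ring
  have hσiw : σ i w = 0 := by
    rw [hgw, hgdef]
    simp only [LinearMap.sub_apply, LinearMap.smul_apply, smul_eq_mul]
    ring
  have hσjw : ∀ j, j ≠ i → 0 < σ j w := by
    intro j hjne
    rw [hgw]
    exact hvpos j (Finset.mem_erase.mpr ⟨hjne, Finset.mem_univ j⟩)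
  -- assemble z = y + K • w
  set K : ℤ := 1 + ∑ j, |σ j y| with hKdef
  have hKpos : 0 < K := by
    have : 0 ≤ ∑ j, |σ j y| := Finset.sum_nonneg fun j _ => abs_nonneg _
    omega
  have hK1 : ∀ j, |σ j y| ≤ K - 1 := by
    intro j
    have h : |σ j y| ≤ ∑ j', |σ j' y| :=
      Finset.single_le_sum (f := fun j' => |σ j' y|) (fun j' _ => abs_nonneg _) (Finset.mem_univ j)
    omega
  set z : Fin n → ℤ := y + K • w with hzdef
  have hform : ∀ j, σ j z = σ j y + K * σ j w := by
    intro j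
    rw [hzdef, map_add, map_zsmul, smul_eq_mul]
  have hσiz : σ i z = 1 := by rw [hform, hσiw, mul_zero, hy, add_zero]
  have hσjz : ∀ j, 0 < σ j z := by
    intro j
    by_cases hji : j = i
    · subst hji; rw [hσiz]; norm_num
    · have h1 : 1 ≤ σ j w := hσjw j hji
      have h3 : K ≤ K * σ j w := le_mul_of_one_le_right hKpos.le h1
      have h4 := hK1 j
      have h5 : -(K - 1) ≤ σ j y := neg_le_of_abs_le h4
      rw [hform]
      linarith
  have hzM : z ∈ M := mem_of_forms_nonneg M hnorm σ hcone z (fun j => (hσjz j).le)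
  exact ⟨z, ⟨hzM, hσjz⟩, hσiz⟩

end
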